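/- Let H be a complex Hilbert space, p₁ ∈ ℂ, and k an H-valued function defined on a neighborhood of p₁ with k(p₁) ≠ 0; set β₁ = k(p₁)/‖k(p₁)‖. Assume there exists k' ∈ H such that (k(p) − k(p₁))/conj(p − p₁) → k' as p → p₁ (p ≠ p₁), and that D := k' − ⟨k', β₁⟩ β₁ ≠ 0. For p near p₁ set α(p) = k(p) − ⟨k(p), β₁⟩ β₁. Then for every fixed θ ∈ ℝ, along the ray p = p₁ + r e^{iθ} with r → 0⁺, one has α(p) ≠ 0 for all sufficiently small r > 0 and α(p)/‖α(p)‖ → e^{−iθ} D/‖D‖ in H. -/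

import Mathlib

open scoped ComplexInnerProductSpace

/-- The unnormalized Gram–Schmidt residual of `v` against the (unit) vector `b`:
`v − ⟨v, b⟩ b` in the paper's convention (inner product linear in the first slot), i.e.
`v − ⟪b, v⟫ • b` in Mathlib's convention. -/
noncomputable def gsResidual {H : Type*} [NormedAddCommGroup H] [InnerProductSpace ℂ H]
    (b v : H) : H :=
  v - (⟪b, v⟫ : ℂ) • b

lemma gsResidual_smul {H : Type*} [NormedAddCommGroup H] [InnerProductSpace ℂ H]
    (b : H) (c : ℂ) (v : H) : gsResidual b (c • v) = c • gsResidual b v := by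
  simp [gsResidual, inner_smul_right, smul_sub, mul_smul]

lemma gsResidual_sub {H : Type*} [NormedAddCommGroup H] [InnerProductSpace ℂ H]
    (b v w : H) : gsResidual b (v - w) = gsResidual b v - gsResidual b w := by
  simp only [gsResidual, inner_sub_right, sub_smul]
  abel

lemma gsResidual_continuous {H : Type*} [NormedAddCommGroup H] [InnerProductSpace ℂ H]
    (b : H) : Continuous (gsResidual b) := by
  unfold gsResidual
  exact continuous_id.sub ((continuous_const.inner continuous_id).smul continuous_const)

theorem stmt17 {H : Type*} [NormedAddCommGroup H] [InnerProductSpace ℂ H]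
    (p₁ : ℂ) (k : ℂ → H) (hk : k p₁ ≠ 0)
    (β₁ : H) (hβ₁ : β₁ = (‖k p₁‖ : ℂ)⁻¹ • k p₁)
    (k' : H)
    (hk' : Filter.Tendsto (fun p : ℂ => ((starRingEnd ℂ) (p - p₁))⁻¹ • (k p - k p₁))
      (nhdsWithin p₁ {p₁}ᶜ) (nhds k'))
    (D : H) (hD : D = gsResidual β₁ k') (hDne : D ≠ 0)
    (α : ℂ → H) (hα : ∀ p, α p = gsResidual β₁ (k p)) :
    ∀ θ : ℝ,
      (∀ᶠ r : ℝ in nhdsWithin 0 (Set.Ioi 0),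
        α (p₁ + (r : ℂ) * Complex.exp ((θ : ℂ) * Complex.I)) ≠ 0) ∧
      Filter.Tendsto
        (fun r : ℝ =>
          (‖α (p₁ + (r : ℂ) * Complex.exp ((θ : ℂ) * Complex.I))‖ : ℂ)⁻¹ •
            α (p₁ + (r : ℂ) * Complex.exp ((θ : ℂ) * Complex.I)))
        (nhdsWithin 0 (Set.Ioi 0))
        (nhds (Complex.exp (-((θ : ℂ) * Complex.I)) • ((‖D‖ : ℂ)⁻¹ • D))) := by
  intro θ
  set e : ℂ := Complex.exp ((θ : ℂ) * Complex.I) with he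
  set ebar : ℂ := Complex.exp (-((θ : ℂ) * Complex.I)) with hebar
  have hce : (starRingEnd ℂ) e = ebar := by
    rw [he, hebar, ← Complex.exp_conj]
    congr 1
    simp [Complex.conj_ofReal]
  have hene : e ≠ 0 := Complex.exp_ne_zero _
  have hebarne : ebar ≠ 0 := Complex.exp_ne_zero _
  have hnormebar : ‖ebar‖ = 1 := by
    rw [← hce, RCLike.norm_conj, he]
    simpa using Complex.abs_exp_ofReal_mul_I θ
  have hnk : (‖k p₁‖ : ℂ) ≠ 0 := by exact_mod_cast norm_ne_zero_iff.mpr hk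
  -- α p₁ = 0
  have hα0 : gsResidual β₁ (k p₁) = 0 := by
    have h2 : (⟪k p₁, k p₁⟫ : ℂ) = (‖k p₁‖ : ℂ) * (‖k p₁‖ : ℂ) := by
      rw [inner_self_eq_norm_sq_to_K]
      norm_cast
      rw [pow_two]
      exact rfl
    rw [gsResidual, hβ₁, inner_smul_left, map_inv₀, Complex.conj_ofReal, h2, smul_smul,
      sub_eq_zero]
    rw [show (‖k p₁‖ : ℂ)⁻¹ * ((‖k p₁‖ : ℂ) * (‖k p₁‖ : ℂ)) * (‖k p₁‖ : ℂ)⁻¹ = 1 by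
      field_simp]
    rw [one_smul]
  -- key limit on ℂ
  have hkey : ∀ p : ℂ, ((starRingEnd ℂ) (p - p₁))⁻¹ • α p
      = gsResidual β₁ (((starRingEnd ℂ) (p - p₁))⁻¹ • (k p - k p₁)) := by
    intro p
    rw [gsResidual_smul, gsResidual_sub, ← hα, hα0, sub_zero, hα]
  have hG : Filter.Tendsto (fun p : ℂ => ((starRingEnd ℂ) (p - p₁))⁻¹ • α p)
      (nhdsWithin p₁ {p₁}ᶜ) (nhds D) := by
    rw [hD]
    exact Filter.Tendsto.congr (fun p => (hkey p).symm)
      (((gsResidual_continuous β₁).tendsto k').comp hk')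
  -- the ray tends to p₁ within {p₁}ᶜ
  have hray : Filter.Tendsto (fun r : ℝ => p₁ + (r : ℂ) * e)
      (nhdsWithin 0 (Set.Ioi 0)) (nhdsWithin p₁ {p₁}ᶜ) := by
    rw [tendsto_nhdsWithin_iff]
    constructor
    · have hc : Continuous (fun r : ℝ => p₁ + (r : ℂ) * e) := by continuity
      have := hc.tendsto 0
      simp only [Complex.ofReal_zero, zero_mul, add_zero] at this
      exact this.mono_left nhdsWithin_le_nhds
    · filter_upwards [self_mem_nhdsWithin] with r hr
      simp only [Set.mem_compl_iff, Set.mem_singleton_iff]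
      intro h
      have : (r : ℂ) * e = 0 := by linear_combination h
      rcases mul_eq_zero.mp this with h' | h'
      · exact (ne_of_gt hr) (by exact_mod_cast h')
      · exact hene h'
  set g : ℝ → H := fun r => ((r : ℂ) * ebar)⁻¹ • α (p₁ + (r : ℂ) * e) with hg
  have hGr : Filter.Tendsto g (nhdsWithin 0 (Set.Ioi 0)) (nhds D) := by
    have := hG.comp hray
    refine this.congr fun r => ?_
    simp only [Function.comp, hg, add_sub_cancel_left, map_mul, Complex.conj_ofReal, hce]
  have hr_pos : ∀ᶠ r : ℝ in nhdsWithin 0 (Set.Ioi 0), 0 < r := self_mem_nhdsWithin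
  have hg_ne : ∀ᶠ r : ℝ in nhdsWithin 0 (Set.Ioi 0), g r ≠ 0 := hGr.eventually_ne hDne
  have hαeq : ∀ r : ℝ, 0 < r → α (p₁ + (r : ℂ) * e) = ((r : ℂ) * ebar) • g r := by
    intro r hr
    rw [hg]
    exact (smul_inv_smul₀ (mul_ne_zero (by exact_mod_cast hr.ne') hebarne) _).symm
  constructor
  · filter_upwards [hr_pos, hg_ne] with r hr hgr
    rw [hαeq r hr]
    exact smul_ne_zero (mul_ne_zero (by exact_mod_cast hr.ne') hebarne) hgr
  · have hDnorm : (‖D‖ : ℂ) ≠ 0 := by exact_mod_cast norm_ne_zero_iff.mpr hDne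
    have hnormt : Filter.Tendsto (fun r : ℝ => (‖g r‖ : ℂ)) (nhdsWithin 0 (Set.Ioi 0))
        (nhds (‖D‖ : ℂ)) :=
      (Complex.continuous_ofReal.tendsto _).comp hGr.norm
    have hN : Filter.Tendsto (fun r : ℝ => (‖g r‖ : ℂ)⁻¹ • g r) (nhdsWithin 0 (Set.Ioi 0))
        (nhds ((‖D‖ : ℂ)⁻¹ • D)) :=
      (hnormt.inv₀ hDnorm).smul hGr
    have hfinal := hN.const_smul ebar
    refine hfinal.congr' ?_
    filter_upwards [hr_pos, hg_ne] with r hr hgr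
    have hgn : ‖g r‖ ≠ 0 := norm_ne_zero_iff.mpr hgr
    obtain ⟨v, hv, hvn⟩ : ∃ v, g r = v ∧ ‖v‖ ≠ 0 := ⟨g r, rfl, hgn⟩
    rw [hαeq r hr, hv, norm_smul, norm_mul, Complex.norm_real, Real.norm_eq_abs,
      abs_of_pos hr, hnormebar, mul_one, smul_smul, smul_smul]
    congr 1
    have hrc : (r : ℂ) ≠ 0 := by exact_mod_cast (ne_of_gt hr)
    push_cast
    field_simp [ne_of_gt hr]
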